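/- Let G be a locally compact Hausdorff abelian topological group, let (A_q)_{q≥1} be a decreasing sequence of compact subsets of G, and let A = ⋂_q A_q be nonempty. Then for every positive integer h, hA = ⋂_q hA_q. -/

import Mathlib

/-- Sum of a nonempty tuple in an additive semigroup. -/
def finSum {S : Type*} [Add S] : ∀ {n : ℕ}, (Fin (n + 1) → S) → S
  | 0, f => f 0
  | n + 1, f => finSum (fun i => f i.castSucc) + f (Fin.last (n + 1))

lemma finSum_continuous {G : Type*} [AddCommGroup G] [TopologicalSpace G]
    [IsTopologicalAddGroup G] : ∀ n : ℕ, Continuous (finSum : (Fin (n + 1) → G) → G) := by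
  intro n
  induction n with
  | zero => exact continuous_apply 0
  | succ n ih =>
    show Continuous fun f : Fin (n + 2) → G =>
      finSum (fun i => f i.castSucc) + f (Fin.last (n + 1))
    exact (ih.comp (continuous_pi fun i => continuous_apply _)).add (continuous_apply _)

/-- The `h`-fold sumset of `A`: all sums of `h` not necessarily distinct elements of `A`. -/
def sumset {S : Type*} [Add S] (A : Set S) : ℕ → Set S
  | 0 => ∅
  | n + 1 => {x | ∃ f : Fin (n + 1) → S, (∀ i, f i ∈ A) ∧ finSum f = x}
theorem stmt16 {G : Type*} [AddCommGroup G] [TopologicalSpace G]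
    [IsTopologicalAddGroup G] [T2Space G] [LocallyCompactSpace G]
    (Aq : ℕ → Set G) (hcomp : ∀ q, IsCompact (Aq q))
    (hdec : ∀ q, Aq (q + 1) ⊆ Aq q)
    (A : Set G) (hA : A = ⋂ q, Aq q) (hne : A.Nonempty)
    (h : ℕ) (hh : 0 < h) :
    sumset A h = ⋂ q, sumset (Aq q) h := by
  obtain ⟨n, rfl⟩ : ∃ n, h = n + 1 := ⟨h - 1, (Nat.succ_pred_eq_of_pos hh).symm⟩
  have hAsub : ∀ q, A ⊆ Aq q := by
    intro q x hx
    rw [hA] at hx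
    exact Set.mem_iInter.mp hx q
  apply Set.Subset.antisymm
  · intro x hx
    refine Set.mem_iInter.mpr fun q => ?_
    obtain ⟨f, hf, hfs⟩ := hx
    exact ⟨f, fun i => hAsub q (hf i), hfs⟩
  · intro x hx
    set K : ℕ → Set (Fin (n + 1) → G) :=
      fun q => {f | (∀ i, f i ∈ Aq q) ∧ finSum f = x} with hK
    have hclosedsum : IsClosed {f : Fin (n + 1) → G | finSum f = x} :=
      isClosed_eq (finSum_continuous n) continuous_const
    have hKcomp : ∀ q, IsCompact (K q) := by
      intro q
      have : K q = (Set.univ.pi fun _ : Fin (n + 1) => Aq q) ∩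
          {f | finSum f = x} := by
        ext f
        simp [hK, Set.mem_pi]
      rw [this]
      exact (isCompact_univ_pi fun _ => hcomp q).inter_right hclosedsum
    have hKclosed : ∀ q, IsClosed (K q) := fun q => (hKcomp q).isClosed
    have hKne : ∀ q, (K q).Nonempty := by
      intro q
      obtain ⟨f, hf, hfs⟩ := Set.mem_iInter.mp hx q
      exact ⟨f, hf, hfs⟩
    have hKdec : ∀ q, K (q + 1) ⊆ K q := by
      intro q f hf
      exact ⟨fun i => hdec q (hf.1 i), hf.2⟩
    obtain ⟨f, hf⟩ := IsCompact.nonempty_iInter_of_sequence_nonempty_isCompact_isClosed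
      K hKdec hKne (hKcomp 0) hKclosed
    refine ⟨f, fun i => ?_, (Set.mem_iInter.mp hf 0).2⟩
    rw [hA]
    exact Set.mem_iInter.mpr fun q => (Set.mem_iInter.mp hf q).1 i
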